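/- Let f : ℂ → ℂ be an entire function with Taylor coefficients c_n, let m > 1 and m' := m/(m−1), and suppose there is a constant C' > 0 such that |c_n| ≤ exp(−C'·n^{m'}) for all n ≥ 0. Then there exists a constant C > 0 (depending only on C' and m) such that log M_f(r) ≤ C·(log r)^m for all r ≥ e. -/

import Mathlib

set_option maxHeartbeats 1000000

/-- Example 3.1, converse direction: if `f` is entire, `m > 1`, `m' = m/(m-1)`, and
`|c_n| ≤ exp(-C'·n^{m'})` for all `n ≥ 0` with some `C' > 0`, then there is a
constant `C` such that `log M_f(r) ≤ C·(log r)^m` for all `r ≥ e`. -/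
theorem logpower_growth_from_coefficient_decay
    (f : ℂ → ℂ) (c : ℕ → ℂ)
    (hf : ∀ z : ℂ, HasSum (fun n : ℕ => c n * z ^ n) (f z))
    (C' m : ℝ) (hC' : 0 < C') (hm : 1 < m)
    (hc : ∀ n : ℕ, ‖c n‖ ≤ Real.exp (-(C' * (n : ℝ) ^ (m / (m - 1))))) :
    ∃ C : ℝ, 0 < C ∧ ∀ r : ℝ, Real.exp 1 ≤ r →
      Real.log (sSup {x : ℝ | ∃ z : ℂ, ‖z‖ = r ∧ x = ‖f z‖})
        ≤ C * Real.log r ^ m := by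
  set m' : ℝ := m / (m - 1) with hm'def
  have hpq : m.HolderConjugate m' := Real.HolderConjugate.conjExponent hm
  have hmpos : 0 < m := hpq.pos
  have hm'pos : 0 < m' := hpq.symm.pos
  set lam : ℝ := (C' * m') ^ (1 / m') with hlamdef
  have hlampos : 0 < lam := Real.rpow_pos_of_pos (by positivity) _
  have hlampow : lam ^ m' = C' * m' := by
    rw [hlamdef, ← Real.rpow_mul (by positivity), one_div,
      inv_mul_cancel₀ hm'pos.ne', Real.rpow_one]
  set K : ℝ := (1 / lam) ^ m / m with hKdef
  have hKpos : 0 < K := by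
    apply div_pos _ hmpos
    exact Real.rpow_pos_of_pos (by positivity) _
  -- key Young-type inequality
  have key : ∀ x s : ℝ, 0 ≤ x → 0 ≤ s → x * s ≤ K * s ^ m + C' * x ^ m' := by
    intro x s hx hs
    have h := Real.young_inequality_of_nonneg
      (mul_nonneg (le_of_lt (by positivity : (0:ℝ) < 1 / lam)) hs)
      (mul_nonneg hlampos.le hx) hpq
    have e1 : (1 / lam * s) * (lam * x) = x * s := by field_simp
    have e2 : (1 / lam * s) ^ m = (1 / lam) ^ m * s ^ m :=
      Real.mul_rpow (by positivity) hs
    have e3 : (lam * x) ^ m' = lam ^ m' * x ^ m' := Real.mul_rpow hlampos.le hx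
    rw [e1, e2, e3, hlampow] at h
    calc x * s ≤ (1 / lam) ^ m * s ^ m / m + C' * m' * x ^ m' / m' := h
      _ = K * s ^ m + C' * x ^ m' := by
          rw [hKdef]; field_simp
  refine ⟨K * 2 ^ m + 1, by positivity, fun r hr => ?_⟩
  set t : ℝ := Real.log r with htdef
  have hrpos : 0 < r := lt_of_lt_of_le (Real.exp_pos 1) hr
  have ht1 : 1 ≤ t := by
    rw [htdef, ← Real.log_exp 1]
    exact Real.log_le_log (Real.exp_pos 1) hr
  have htpos : 0 < t := lt_of_lt_of_le one_pos ht1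
  have hrt : r = Real.exp t := (Real.exp_log hrpos).symm
  set s : ℝ := t + 1 with hsdef
  have hs0 : 0 ≤ s := by positivity
  set B : ℝ := Real.exp (K * s ^ m) * (1 - Real.exp (-1))⁻¹ with hBdef
  have hexp1 : Real.exp (-1) < 1 := by
    rw [Real.exp_lt_one_iff]; norm_num
  have hgsum : Summable (fun n : ℕ => Real.exp (K * s ^ m) * Real.exp (-1) ^ n) :=
    (summable_geometric_of_lt_one (Real.exp_pos _).le hexp1).mul_left _
  -- termwise bound
  have hterm : ∀ n : ℕ, ‖c n‖ * r ^ n ≤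
      Real.exp (K * s ^ m) * Real.exp (-1) ^ n := by
    intro n
    have h1 : ‖c n‖ * r ^ n ≤
        Real.exp (-(C' * (n : ℝ) ^ m')) * r ^ n := by
      apply mul_le_mul_of_nonneg_right (hc n) (by positivity)
    refine h1.trans ?_
    rw [hrt, ← Real.exp_nat_mul, ← Real.exp_add, ← Real.exp_nat_mul, ← Real.exp_add]
    apply Real.exp_le_exp.2
    have hkey := key (n : ℝ) s (Nat.cast_nonneg n) hs0
    have : (n : ℝ) * s = (n : ℝ) * t + n := by rw [hsdef]; ring
    nlinarith [hkey]
  -- bound on |f z| for |z| = r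
  have hfb : ∀ z : ℂ, ‖z‖ = r → ‖f z‖ ≤ B := by
    intro z hz
    have habs : ∀ n : ℕ, ‖c n * z ^ n‖ = ‖c n‖ * r ^ n := by
      intro n
      rw [norm_mul, norm_pow, hz]
    have hsum2 : Summable (fun n : ℕ => ‖c n * z ^ n‖) := by
      apply Summable.of_nonneg_of_le (fun n => norm_nonneg _) _ hgsum
      intro n; rw [habs n]; exact hterm n
    have h1 : ‖f z‖ ≤ ∑' n : ℕ, ‖c n * z ^ n‖ := by
      rw [← (hf z).tsum_eq]
      exact norm_tsum_le_tsum_norm hsum2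
    refine h1.trans ?_
    have h2 : ∑' n : ℕ, ‖c n * z ^ n‖ ≤
        ∑' n : ℕ, Real.exp (K * s ^ m) * Real.exp (-1) ^ n := by
      apply Summable.tsum_le_tsum _ hsum2 hgsum
      intro n; rw [habs n]; exact hterm n
    refine h2.trans ?_
    rw [tsum_mul_left, tsum_geometric_of_lt_one (Real.exp_pos _).le hexp1, hBdef]
  -- the sup set
  set S : Set ℝ := {x : ℝ | ∃ z : ℂ, ‖z‖ = r ∧ x = ‖f z‖} with hSdef
  have hSne : S.Nonempty := ⟨‖f r‖, (r : ℂ), by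
    simp [abs_of_pos hrpos]⟩
  have hSub : ∀ x ∈ S, x ≤ B := by
    rintro x ⟨z, hz, rfl⟩; exact hfb z hz
  have hsup : sSup S ≤ B := csSup_le hSne hSub
  have hB1 : 1 ≤ B := by
    rw [hBdef]
    have h1 : (1:ℝ) ≤ Real.exp (K * s ^ m) := by
      rw [Real.one_le_exp_iff]; positivity
    have h2 : (1:ℝ) ≤ (1 - Real.exp (-1))⁻¹ :=
      (one_le_inv₀ (by linarith [Real.exp_pos (-1:ℝ)])).2
        (by linarith [Real.exp_pos (-1:ℝ)])
    nlinarith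
  have hS0 : 0 ≤ sSup S := by
    rcases hSne with ⟨x, hx⟩
    have hxnn : 0 ≤ x := by
      rcases hx with ⟨z, _, rfl⟩; exact norm_nonneg _
    exact hxnn.trans (le_csSup ⟨B, hSub⟩ hx)
  have hlogsup : Real.log (sSup S) ≤ Real.log B := by
    rcases eq_or_lt_of_le hS0 with h | h
    · rw [← h, Real.log_zero]; exact Real.log_nonneg hB1
    · exact Real.log_le_log h hsup
  refine hlogsup.trans ?_
  -- log B ≤ K * s^m + 1
  have hd : 0 < 1 - Real.exp (-1) := by linarith
  have he : Real.exp (-1) ≤ 1 / 2 := by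
    rw [Real.exp_neg, inv_le_comm₀ (Real.exp_pos 1) (by norm_num)]
    have h9 := Real.exp_one_gt_d9
    norm_num; linarith
  have hinv : (1 - Real.exp (-1))⁻¹ ≤ Real.exp 1 := by
    rw [inv_le_comm₀ hd (Real.exp_pos 1), ← Real.exp_neg]
    linarith
  have hlogB : Real.log B ≤ K * s ^ m + 1 := by
    rw [hBdef, Real.log_mul (Real.exp_pos _).ne' (by positivity : ((1 - Real.exp (-1))⁻¹:ℝ) ≠ 0),
      Real.log_exp]
    have : Real.log (1 - Real.exp (-1))⁻¹ ≤ 1 := by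
      calc Real.log (1 - Real.exp (-1))⁻¹ ≤ Real.log (Real.exp 1) :=
            Real.log_le_log (by positivity) hinv
        _ = 1 := Real.log_exp 1
    linarith
  refine hlogB.trans ?_
  -- K * s^m + 1 ≤ (K * 2^m + 1) * t^m
  have hsm : s ^ m ≤ 2 ^ m * t ^ m := by
    rw [← Real.mul_rpow (by norm_num) htpos.le]
    apply Real.rpow_le_rpow hs0 (by rw [hsdef]; linarith) hmpos.le
  have htm : 1 ≤ t ^ m := Real.one_le_rpow ht1 hmpos.le
  nlinarith [hKpos, htm, hsm]
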